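/- Let g:[a,b]→ℝ be continuous at a and b, left-continuous on (a,b), and increasing, and let f:[a,b]→ℝ be g-Lipschitz continuous with constant H. If the continuous part g^C is Lipschitz continuous with constant H, then the continuous part f^C is Lipschitz continuous with constant H². -/

import Mathlib

open Set Filter Function Topology


open Set

/-- Right jump of a function: `u(t⁺) - u(t)`. -/
noncomputable def rjump (u : ℝ → ℝ) (t : ℝ) : ℝ := Function.rightLim u t - u t

/-- Cumulative jump part of `u` on `[a, t)`: `u^B(t) = Σ_{s ∈ [a,t)} Δ⁺u(s)`. -/
noncomputable def jumpPart (u : ℝ → ℝ) (a t : ℝ) : ℝ :=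
  ∑' s : ℝ, Set.indicator (Set.Ico a t) (fun v => rjump u v) s

/-- Continuous part of `u` (relative to the base point `a`): `u^C = u - u^B`. -/
noncomputable def contPart (u : ℝ → ℝ) (a t : ℝ) : ℝ := u t - jumpPart u a t

/-- `I` is the Kurzweil–Stieltjes integral `∫_a^b f dg`: for every `ε > 0` there is a
gauge `δ` such that every `δ`-fine tagged partition of `[a,b]` has Riemann–Stieltjes
sum within `ε` of `I`. -/
def IsKSIntegral (f g : ℝ → ℝ) (a b I : ℝ) : Prop :=
  ∀ ε > (0:ℝ), ∃ δ : ℝ → ℝ, (∀ x, 0 < δ x) ∧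
    ∀ (n : ℕ) (t ξ : ℕ → ℝ),
      t 0 = a → t n = b →
      (∀ i < n, t i < t (i + 1)) →
      (∀ i < n, t i ≤ ξ i ∧ ξ i ≤ t (i + 1)) →
      (∀ i < n, ξ i - δ (ξ i) < t i ∧ t (i + 1) < ξ i + δ (ξ i)) →
      |(∑ i ∈ Finset.range n, f (ξ i) * (g (t (i + 1)) - g (t i))) - I| < ε

/-- `f` is `g`-Lipschitz continuous on `[a,b]` with constant `H`. -/
def GLipschitzOn (f g : ℝ → ℝ) (H a b : ℝ) : Prop :=
  ∀ t ∈ Set.Icc a b, ∀ s ∈ Set.Icc a b, |f t - f s| ≤ H * |g t - g s|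

/-- `g` is left-continuous at every point of `s`. -/
def LeftContOn (g : ℝ → ℝ) (s : Set ℝ) : Prop :=
  ∀ t ∈ s, Filter.Tendsto g (nhdsWithin t (Set.Iio t)) (nhds (g t))

section aux


variable {a b H : ℝ} {g f : ℝ → ℝ}

lemma sum_ind (F : Finset ℝ) (S : Set ℝ) (h : ℝ → ℝ) [DecidablePred (· ∈ S)] :
    ∑ s ∈ F, S.indicator h s = ∑ s ∈ F.filter (fun s => s ∈ S), h s := by
  rw [Finset.sum_filter]
  exact Finset.sum_congr rfl fun x _ => by simp [Set.indicator_apply]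

lemma g_rl (hg : MonotoneOn g (Icc a b)) (hab : a ≤ b) {v : ℝ} (hv : v ∈ Ico a b) :
    Tendsto g (𝓝[>] v) (𝓝 (Function.rightLim g v)) := by
  have hne : (Ioo v b).Nonempty := nonempty_Ioo.2 hv.2
  have hsub : Ioo v b ⊆ Icc a b := fun t ht => ⟨(hv.1.trans ht.1.le), ht.2.le⟩
  have Mf : MonotoneOn g (Ioo v b) := hg.mono hsub
  have hbdd : BddBelow (g '' Ioo v b) := by
    refine ⟨g a, ?_⟩
    rintro _ ⟨t, ht, rfl⟩
    exact hg (left_mem_Icc.2 hab) (hsub ht) (hsub ht).1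
  have h := MonotoneOn.tendsto_nhdsWithin_Ioo_right hne Mf hbdd
  rwa [rightLim_eq_of_tendsto h]

lemma f_rl (hg : MonotoneOn g (Icc a b)) (hf : GLipschitzOn f g H a b) (hH : 0 ≤ H)
    (hab : a ≤ b) {v : ℝ} (hv : v ∈ Ico a b) :
    Tendsto f (𝓝[>] v) (𝓝 (Function.rightLim f v)) := by
  have hgl := g_rl hg hab hv
  have hC : Cauchy (Filter.map f (𝓝[>] v)) := by
    rw [Metric.cauchy_iff]
    constructor
    · exact Filter.map_neBot
    · intro ε hε
      have hε2 : (0:ℝ) < ε / (2 * (H + 1)) := by positivity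
      have hball : g ⁻¹' Metric.ball (Function.rightLim g v) (ε / (2 * (H + 1))) ∈ 𝓝[>] v :=
        hgl (Metric.ball_mem_nhds _ hε2)
      have hIoo : Ioo v b ∈ 𝓝[>] v := Ioo_mem_nhdsGT hv.2
      refine ⟨f '' (Ioo v b ∩ g ⁻¹' Metric.ball (Function.rightLim g v) (ε / (2 * (H + 1)))),
        image_mem_map (inter_mem hIoo hball), ?_⟩
      rintro _ ⟨t, ⟨ht, htb⟩, rfl⟩ _ ⟨s, ⟨hs, hsb⟩, rfl⟩
      have htI : t ∈ Icc a b := ⟨hv.1.trans ht.1.le, ht.2.le⟩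
      have hsI : s ∈ Icc a b := ⟨hv.1.trans hs.1.le, hs.2.le⟩
      have h1 : |f t - f s| ≤ H * |g t - g s| := hf t htI s hsI
      have h2 : |g t - g s| < 2 * (ε / (2 * (H + 1))) := by
        have := Metric.mem_ball.1 htb
        have := Metric.mem_ball.1 hsb
        rw [Real.dist_eq] at *
        calc |g t - g s| ≤ |g t - Function.rightLim g v| + |g s - Function.rightLim g v| := by
              rw [abs_sub_comm (g s)]; exact abs_sub_le _ _ _
          _ < _ := by linarith
      rw [Real.dist_eq]
      calc |f t - f s| ≤ H * |g t - g s| := h1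
        _ ≤ H * (2 * (ε / (2 * (H + 1)))) := by nlinarith [abs_nonneg (g t - g s)]
        _ < ε := by
            have hH1 : (0:ℝ) < H + 1 := by linarith
            rw [show H * (2 * (ε / (2 * (H + 1)))) = H * ε / (H + 1) by field_simp]
            rw [div_lt_iff₀ hH1]; nlinarith
  obtain ⟨c, hc⟩ := CompleteSpace.complete hC
  have hc' : Tendsto f (𝓝[>] v) (𝓝 c) := hc
  rwa [rightLim_eq_of_tendsto hc']

lemma rl_g_le (hg : MonotoneOn g (Icc a b)) (hab : a ≤ b) {v x : ℝ} (hv : v ∈ Ico a b)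
    (hx : x ∈ Ioc v b) : Function.rightLim g v ≤ g x := by
  refine le_of_tendsto (g_rl hg hab hv) ?_
  filter_upwards [Ioo_mem_nhdsGT hx.1] with t ht
  exact hg ⟨hv.1.trans ht.1.le, ht.2.le.trans hx.2⟩ ⟨hv.1.trans hx.1.le, hx.2⟩ ht.2.le

lemma g_le_rl (hg : MonotoneOn g (Icc a b)) (hab : a ≤ b) {v : ℝ} (hv : v ∈ Ico a b) :
    g v ≤ Function.rightLim g v := by
  refine ge_of_tendsto (g_rl hg hab hv) ?_
  filter_upwards [Ioo_mem_nhdsGT hv.2] with t ht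
  exact hg ⟨hv.1, hv.2.le⟩ ⟨hv.1.trans ht.1.le, ht.2.le⟩ ht.1.le

lemma rjump_g_nonneg (hg : MonotoneOn g (Icc a b)) (hab : a ≤ b) {v : ℝ} (hv : v ∈ Ico a b) :
    0 ≤ rjump g v := sub_nonneg.2 (g_le_rl hg hab hv)

lemma key_f (hg : MonotoneOn g (Icc a b)) (hf : GLipschitzOn f g H a b) (hH : 0 ≤ H)
    (hab : a ≤ b) {v x : ℝ} (hv : v ∈ Ico a b) (hx : x ∈ Ioc v b) :
    |f x - Function.rightLim f v| ≤ H * (g x - Function.rightLim g v) := by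
  have hgl := g_rl hg hab hv
  have hfl := f_rl hg hf hH hab hv
  have h1 : Tendsto (fun t => |f x - f t|) (𝓝[>] v) (𝓝 |f x - Function.rightLim f v|) :=
    ((tendsto_const_nhds.sub hfl).abs)
  have h2 : Tendsto (fun t => H * (g x - g t)) (𝓝[>] v) (𝓝 (H * (g x - Function.rightLim g v))) :=
    (tendsto_const_nhds.sub hgl).const_mul H
  refine le_of_tendsto_of_tendsto h1 h2 ?_
  filter_upwards [Ioo_mem_nhdsGT hx.1] with t ht
  have htI : t ∈ Icc a b := ⟨hv.1.trans ht.1.le, ht.2.le.trans hx.2⟩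
  have hxI : x ∈ Icc a b := ⟨hv.1.trans hx.1.le, hx.2⟩
  calc |f x - f t| ≤ H * |g x - g t| := hf x hxI t htI
    _ = H * (g x - g t) := by rw [abs_of_nonneg (sub_nonneg.2 (hg htI hxI ht.2.le))]

lemma rjump_f_le (hg : MonotoneOn g (Icc a b)) (hf : GLipschitzOn f g H a b) (hH : 0 ≤ H)
    (hab : a ≤ b) {v : ℝ} (hv : v ∈ Ico a b) :
    |rjump f v| ≤ H * rjump g v := by
  have hgl := g_rl hg hab hv
  have hfl := f_rl hg hf hH hab hv
  have h1 : Tendsto (fun t => |f t - f v|) (𝓝[>] v)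
      (𝓝 |Function.rightLim f v - f v|) := (hfl.sub tendsto_const_nhds).abs
  have h2 : Tendsto (fun t => H * (g t - g v)) (𝓝[>] v)
      (𝓝 (H * (Function.rightLim g v - g v))) := (hgl.sub tendsto_const_nhds).const_mul H
  refine le_of_tendsto_of_tendsto h1 h2 ?_
  filter_upwards [Ioo_mem_nhdsGT hv.2] with t ht
  have htI : t ∈ Icc a b := ⟨hv.1.trans ht.1.le, ht.2.le⟩
  have hvI : v ∈ Icc a b := ⟨hv.1, hv.2.le⟩
  calc |f t - f v| ≤ H * |g t - g v| := hf t htI v hvI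
    _ = H * (g t - g v) := by rw [abs_of_nonneg (sub_nonneg.2 (hg hvI htI ht.1.le))]

lemma sum_rjump_g_le (hg : MonotoneOn g (Icc a b)) (hab : a ≤ b) {y : ℝ} (hy : a ≤ y)
    (F : Finset ℝ) :
    ∀ x, ↑F ⊆ Ico y x → y ≤ x → x ≤ b → ∑ s ∈ F, rjump g s ≤ g x - g y := by
  classical
  induction F using Finset.induction_on_max with
  | empty =>
    intro x _ hyx hxb
    simpa using sub_nonneg.2 (hg ⟨hy, hyx.trans hxb⟩ ⟨hy.trans hyx, hxb⟩ hyx)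
  | insert m F hFm ih =>
    intro x hsub hyx hxb
    have hm : m ∈ Ico y x := hsub (by simp)
    have hmb : m ∈ Ico a b := ⟨hy.trans hm.1, lt_of_lt_of_le hm.2 hxb⟩
    have hFsub : ↑F ⊆ Ico y m := fun s hs => ⟨(hsub (by simp [hs])).1, hFm s hs⟩
    have hIH := ih m hFsub hm.1 hmb.2.le
    have hjump : rjump g m ≤ g x - g m :=
      sub_le_sub_right (rl_g_le hg hab hmb ⟨hm.2, hxb⟩) (g m)
    rw [Finset.sum_insert (fun hmem => lt_irrefl m (hFm m hmem))]
    linarith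

lemma main_fin (hg : MonotoneOn g (Icc a b)) (hf : GLipschitzOn f g H a b) (hH : 0 ≤ H)
    (hab : a ≤ b) {y : ℝ} (hy : a ≤ y) (F : Finset ℝ) :
    ∀ x, ↑F ⊆ Ico y x → y ≤ x → x ≤ b →
      |f x - f y - ∑ s ∈ F, rjump f s| ≤ H * (g x - g y - ∑ s ∈ F, rjump g s) := by
  classical
  induction F using Finset.induction_on_max with
  | empty =>
    intro x _ hyx hxb
    simp only [Finset.sum_empty, sub_zero]
    calc |f x - f y| ≤ H * |g x - g y| := hf x ⟨hy.trans hyx, hxb⟩ y ⟨hy, hyx.trans hxb⟩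
      _ = H * (g x - g y) := by
          rw [abs_of_nonneg (sub_nonneg.2 (hg ⟨hy, hyx.trans hxb⟩ ⟨hy.trans hyx, hxb⟩ hyx))]
  | insert m F hFm ih =>
    intro x hsub hyx hxb
    have hm : m ∈ Ico y x := hsub (by simp)
    have hmab : m ∈ Ico a b := ⟨hy.trans hm.1, lt_of_lt_of_le hm.2 hxb⟩
    have hFsub : ↑F ⊆ Ico y m := fun s hs => ⟨(hsub (by simp [hs])).1, hFm s hs⟩
    have hIH := ih m hFsub hm.1 hmab.2.le
    have hkey := key_f hg hf hH hab hmab (⟨hm.2, hxb⟩ : x ∈ Ioc m b)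
    have hne : m ∉ F := fun hmem => lt_irrefl m (hFm m hmem)
    rw [Finset.sum_insert hne, Finset.sum_insert hne]
    have heq : f x - f y - (rjump f m + ∑ s ∈ F, rjump f s)
        = (f x - Function.rightLim f m) + (f m - f y - ∑ s ∈ F, rjump f s) := by
      simp only [rjump]; ring
    rw [heq]
    calc |(f x - Function.rightLim f m) + (f m - f y - ∑ s ∈ F, rjump f s)|
        ≤ |f x - Function.rightLim f m| + |f m - f y - ∑ s ∈ F, rjump f s| := abs_add_le _ _
      _ ≤ H * (g x - Function.rightLim g m) + H * (g m - g y - ∑ s ∈ F, rjump g s) := by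
          linarith
      _ = H * (g x - g y - (rjump g m + ∑ s ∈ F, rjump g s)) := by
          simp only [rjump]; ring

lemma summable_g_ind (hg : MonotoneOn g (Icc a b)) (hab : a ≤ b) {y x : ℝ} (hy : a ≤ y)
    (hxb : x ≤ b) : Summable ((Ico y x).indicator (rjump g)) := by
  classical
  rcases le_or_gt x y with h | h
  · rw [Set.Ico_eq_empty (by exact fun hlt => absurd h (not_le.2 hlt))]
    simp [Set.indicator_empty]
  · refine summable_of_sum_le (c := g x - g y) ?_ ?_
    · intro s
      simp only [Pi.zero_apply]
      by_cases hs : s ∈ Ico y x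
      · rw [Set.indicator_of_mem hs]
        exact rjump_g_nonneg hg hab ⟨hy.trans hs.1, lt_of_lt_of_le hs.2 hxb⟩
      · rw [Set.indicator_of_notMem hs]
    · intro F
      rw [sum_ind]
      exact sum_rjump_g_le hg hab hy _ x
        (fun s hs => (Finset.mem_filter.1 (Finset.mem_coe.1 hs)).2) h.le hxb

lemma summable_f_ind (hg : MonotoneOn g (Icc a b)) (hf : GLipschitzOn f g H a b) (hH : 0 ≤ H)
    (hab : a ≤ b) {y x : ℝ} (hy : a ≤ y) (hxb : x ≤ b) :
    Summable ((Ico y x).indicator (rjump f)) := by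
  rw [← summable_abs_iff]
  refine Summable.of_nonneg_of_le (fun s => abs_nonneg _) (fun s => ?_)
    ((summable_g_ind hg hab hy hxb).mul_left H)
  by_cases hs : s ∈ Ico y x
  · rw [Set.indicator_of_mem hs, Set.indicator_of_mem hs]
    exact rjump_f_le hg hf hH hab ⟨hy.trans hs.1, lt_of_lt_of_le hs.2 hxb⟩
  · rw [Set.indicator_of_notMem hs, Set.indicator_of_notMem hs]
    simp

lemma core (hg : MonotoneOn g (Icc a b)) (hf : GLipschitzOn f g H a b) (hH : 0 ≤ H)
    (hab : a ≤ b) {y x : ℝ} (hay : a ≤ y) (hyx : y ≤ x) (hxb : x ≤ b) :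
    |f x - f y - ∑' s, (Ico y x).indicator (rjump f) s|
      ≤ H * (g x - g y - ∑' s, (Ico y x).indicator (rjump g) s) := by
  classical
  set Jf := ∑' s, (Ico y x).indicator (rjump f) s with hJf
  set Jg := ∑' s, (Ico y x).indicator (rjump g) s with hJg
  refine le_of_forall_pos_le_add ?_
  intro ε hε
  have hSf := (summable_f_ind hg hf hH hab hay hxb).hasSum
  have hSg := (summable_g_ind hg hab hay hxb).hasSum
  rw [HasSum] at hSf hSg
  have hεf : (0:ℝ) < ε / 2 := by linarith
  have hεg : (0:ℝ) < ε / (2 * (H + 1)) := by positivity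
  obtain ⟨F1, hF1⟩ := (Filter.tendsto_atTop'.1 hSf _ (Metric.ball_mem_nhds _ hεf))
  obtain ⟨F2, hF2⟩ := (Filter.tendsto_atTop'.1 hSg _ (Metric.ball_mem_nhds _ hεg))
  set F := F1 ∪ F2 with hF
  have hf1 : |∑ s ∈ F, (Ico y x).indicator (rjump f) s - Jf| < ε / 2 := by
    have := hF1 F Finset.subset_union_left
    rwa [Metric.mem_ball, Real.dist_eq] at this
  have hg1 : |∑ s ∈ F, (Ico y x).indicator (rjump g) s - Jg| < ε / (2 * (H + 1)) := by
    have := hF2 F Finset.subset_union_right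
    rwa [Metric.mem_ball, Real.dist_eq] at this
  set G := F.filter (fun s => s ∈ Ico y x) with hG
  have hGf : ∑ s ∈ F, (Ico y x).indicator (rjump f) s = ∑ s ∈ G, rjump f s := sum_ind ..
  have hGg : ∑ s ∈ F, (Ico y x).indicator (rjump g) s = ∑ s ∈ G, rjump g s := sum_ind ..
  have hGsub : ↑G ⊆ Ico y x := fun s hs => (Finset.mem_filter.1 (Finset.mem_coe.1 hs)).2
  have hmain := main_fin hg hf hH hab hay G x hGsub hyx hxb
  rw [hGf] at hf1
  rw [hGg] at hg1
  have h2 : g x - g y - ∑ s ∈ G, rjump g s ≤ g x - g y - Jg + ε / (2 * (H + 1)) := by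
    have := abs_lt.1 hg1
    linarith [this.1]
  have h3 : H * (g x - g y - ∑ s ∈ G, rjump g s)
      ≤ H * (g x - g y - Jg + ε / (2 * (H + 1))) := mul_le_mul_of_nonneg_left h2 hH
  have h4 : H * (ε / (2 * (H + 1))) ≤ ε / 2 := by
    rw [mul_div_assoc', div_le_div_iff₀ (by positivity) (by norm_num : (0:ℝ) < 2)]
    nlinarith
  have h5 : |f x - f y - Jf| ≤ |f x - f y - ∑ s ∈ G, rjump f s| + |∑ s ∈ G, rjump f s - Jf| := by
    have : f x - f y - Jf = (f x - f y - ∑ s ∈ G, rjump f s) + (∑ s ∈ G, rjump f s - Jf) := by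
      ring
    rw [this]; exact abs_add_le _ _
  have h6 := abs_lt.1 hf1
  have : H * (g x - g y - Jg + ε / (2 * (H + 1)))
      = H * (g x - g y - Jg) + H * (ε / (2 * (H + 1))) := by ring
  linarith [this ▸ h3]

end aux


lemma tsum_ind_split {h : ℝ → ℝ} {a y x : ℝ} (hay : a ≤ y) (hyx : y ≤ x)
    (h1 : Summable ((Ico a y).indicator h)) (h2 : Summable ((Ico y x).indicator h)) :
    ∑' s, (Ico a x).indicator h s
      = ∑' s, (Ico a y).indicator h s + ∑' s, (Ico y x).indicator h s := by
  rw [← Summable.tsum_add h1 h2]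
  congr 1
  funext s
  rw [← Set.Ico_union_Ico_eq_Ico hay hyx,
    Set.indicator_union_of_disjoint Set.Ico_disjoint_Ico_same]


/-- If `g : [a,b] → ℝ` is continuous at `a` and `b`, left-continuous on
`(a,b)` and increasing, `f` is `g`-Lipschitz with constant `H`, and `g^C` is Lipschitz with
constant `H`, then `f^C` is Lipschitz with constant `H²`. -/
theorem contPart_lipschitz_sq
    (a b H : ℝ) (hab : a ≤ b) (g f : ℝ → ℝ)
    (hg : MonotoneOn g (Set.Icc a b))
    (hga : ContinuousWithinAt g (Set.Icc a b) a)
    (hgb : ContinuousWithinAt g (Set.Icc a b) b)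
    (hglc : LeftContOn g (Set.Ioo a b))
    (hf : GLipschitzOn f g H a b)
    (hgC : ∀ x ∈ Set.Icc a b, ∀ y ∈ Set.Icc a b,
      |contPart g a x - contPart g a y| ≤ H * |x - y|) :
    ∀ x ∈ Set.Icc a b, ∀ y ∈ Set.Icc a b,
      |contPart f a x - contPart f a y| ≤ H ^ 2 * |x - y| := by
  have key : ∀ x ∈ Set.Icc a b, ∀ y ∈ Set.Icc a b, y < x →
      |contPart f a x - contPart f a y| ≤ H ^ 2 * |x - y| := by
    intro x hx y hy hyx
    have hH : 0 ≤ H := by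
      by_contra hneg
      have h0 := hgC x hx y hy
      have hpos : (0:ℝ) < |x - y| := abs_pos.2 (sub_ne_zero.2 hyx.ne')
      nlinarith [abs_nonneg (contPart g a x - contPart g a y)]
    have e1 : contPart f a x - contPart f a y
        = f x - f y - ∑' s, (Ico y x).indicator (rjump f) s := by
      have := tsum_ind_split (h := rjump f) hy.1 hyx.le
        (summable_f_ind hg hf hH hab le_rfl hy.2) (summable_f_ind hg hf hH hab hy.1 hx.2)
      simp only [contPart, jumpPart]
      rw [this]; ring
    have e2 : contPart g a x - contPart g a y
        = g x - g y - ∑' s, (Ico y x).indicator (rjump g) s := by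
      have := tsum_ind_split (h := rjump g) hy.1 hyx.le
        (summable_g_ind hg hab le_rfl hy.2) (summable_g_ind hg hab hy.1 hx.2)
      simp only [contPart, jumpPart]
      rw [this]; ring
    have hcore := core hg hf hH hab hy.1 hyx.le hx.2
    calc |contPart f a x - contPart f a y|
        = |f x - f y - ∑' s, (Ico y x).indicator (rjump f) s| := by rw [e1]
      _ ≤ H * (g x - g y - ∑' s, (Ico y x).indicator (rjump g) s) := hcore
      _ = H * (contPart g a x - contPart g a y) := by rw [e2]
      _ ≤ H * |contPart g a x - contPart g a y| :=
          mul_le_mul_of_nonneg_left (le_abs_self _) hH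
      _ ≤ H * (H * |x - y|) := mul_le_mul_of_nonneg_left (hgC x hx y hy) hH
      _ = H ^ 2 * |x - y| := by ring
  intro x hx y hy
  rcases lt_trichotomy x y with h | h | h
  · rw [abs_sub_comm, abs_sub_comm x y]
    exact key y hy x hx h
  · simp [h]
  · exact key x hx y hy h
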